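/- Let n ≥ 2 and 1 ≤ r < n be integers and let ν₁, ν₂, η₁, η₂ be words such that ν₁ and ν₂ are incomparable, η₁ and η₂ are incomparable, U_{ν₁} ∪ U_{ν₂} ≠ 𝔠_{n,r}, and U_{η₁} ∪ U_{η₂} ≠ 𝔠_{n,r}. Then there exists g ∈ G_{n,r} such that g(ν₁⌢x) = η₁⌢x and g(ν₂⌢x) = η₂⌢x for all x ∈ 𝔠_n. -/

import Mathlib

open Set

namespace HigmanAut

/-- The one-sided infinite sequence space `𝔠_n` on `n` letters. -/
abbrev Cn (n : ℕ) : Type := ℕ → Fin n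

/-- The Cantor space `𝔠_{n,r} = Fin r × (ℕ → Fin n)` (with the product topology,
`Fin r` and `Fin n` discrete). -/
abbrev CNR (n r : ℕ) : Type := Fin r × Cn n

/-- A word: a letter from `Fin r` together with a finite list over `Fin n`. -/
abbrev Word (n r : ℕ) : Type := Fin r × List (Fin n)

/-- Self-homeomorphisms of `𝔠_{n,r}`. -/
abbrev Homeo (n r : ℕ) : Type := CNR n r ≃ₜ CNR n r

/-- Append a finite list to a word: `ν⌢w`. -/
def wApp {n r : ℕ} (ν : Word n r) (w : List (Fin n)) : Word n r := (ν.1, ν.2 ++ w)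

/-- The point `ν⌢x` of `𝔠_{n,r}` determined by a word `ν` followed by `x ∈ 𝔠_n`. -/
def wCat {n r : ℕ} (ν : Word n r) (x : Cn n) : CNR n r :=
  (ν.1, fun i => if h : i < ν.2.length then ν.2.get ⟨i, h⟩ else x (i - ν.2.length))

/-- The cone `U_ν` of a word `ν`. -/
def cone {n r : ℕ} (ν : Word n r) : Set (CNR n r) :=
  {p | p.1 = ν.1 ∧ ∀ (i : ℕ) (h : i < ν.2.length), p.2 i = ν.2.get ⟨i, h⟩}

/-- Membership in the Higman--Thompson group `G_{n,r}`: `g` is a prefix code map,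
i.e. there are `k ≥ 1` and words `ν i`, `η i` whose cones partition `𝔠_{n,r}`
with `g(ν i ⌢ x) = η i ⌢ x` for all `i`, `x`. -/
def IsHigman {n r : ℕ} (g : Homeo n r) : Prop :=
  ∃ k : ℕ, 0 < k ∧ ∃ ν η : Fin k → Word n r,
    (∀ p : CNR n r, ∃! i : Fin k, p ∈ cone (ν i)) ∧
    (∀ p : CNR n r, ∃! i : Fin k, p ∈ cone (η i)) ∧
    (∀ (i : Fin k) (x : Cn n), g (wCat (ν i) x) = wCat (η i) x)

/-- The Higman--Thompson group `G_{n,r}` as a set of homeomorphisms. -/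
def higmanSet (n r : ℕ) : Set (Homeo n r) := {g | IsHigman g}

/-- Conjugation: in the paper's right-action notation this is `g ↦ h⁻¹ g h`
(as a left function, `x ↦ h (g (h⁻¹ x))`). -/
def conjH {n r : ℕ} (h g : Homeo n r) : Homeo n r := (h.symm.trans g).trans h

/-- `h` acts in the same fashion on `U_α` and `U_β`: there are words `α'`, `β'`
and a common local action `f` with `h(α⌢x) = α'⌢f(x)` and `h(β⌢x) = β'⌢f(x)`. -/
def SameFashion {n r : ℕ} (h : Homeo n r) (α β : Word n r) : Prop :=
  ∃ (α' β' : Word n r) (f : Cn n → Cn n),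
    (∀ x : Cn n, h (wCat α x) = wCat α' (f x)) ∧
    (∀ x : Cn n, h (wCat β x) = wCat β' (f x))

/-- Tail equivalence on `𝔠_{n,r}`. -/
def TailEq {n r : ℕ} (x y : CNR n r) : Prop :=
  ∃ (ν η : Word n r) (z : Cn n), x = wCat ν z ∧ y = wCat η z

/-- `h` is pointwise canonical. -/
def PtwiseCanonical {n r : ℕ} (h : Homeo n r) : Prop :=
  ∀ x : CNR n r, ∃ (η₁ η₂ : Word n r) (y : Cn n), x = wCat η₁ y ∧ h x = wCat η₂ y

/-- `h` is densely canonical. -/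
def DenselyCanonical {n r : ℕ} (h : Homeo n r) : Prop :=
  ∀ U : Set (CNR n r), IsOpen U → U.Nonempty →
    ∃ η ζ : Word n r, cone η ⊆ U ∧ ∀ x : Cn n, h (wCat η x) = wCat ζ x

/-- `h` belongs to `H_{n,r,∼}`: `x ∼ y` iff `h(x) ∼ h(y)`. -/
def PreservesTailEq {n r : ℕ} (h : Homeo n r) : Prop :=
  ∀ x y : CNR n r, TailEq x y ↔ TailEq (h x) (h y)

/-- `ν` is a prefix of `η`, i.e. `U_η ⊆ U_ν`. -/
def WPrefix {n r : ℕ} (ν η : Word n r) : Prop := cone η ⊆ cone ν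

/-- Two words are incomparable if neither is a prefix of the other. -/
def Incomp {n r : ℕ} (ν η : Word n r) : Prop := ¬ WPrefix ν η ∧ ¬ WPrefix η ν

section Aux
variable {n r : ℕ}

lemma wCat_snd_lt (ν : Word n r) (x : Cn n) {i : ℕ} (h : i < ν.2.length) :
    (wCat ν x).2 i = ν.2.get ⟨i, h⟩ := by simp [wCat, h]

lemma wCat_snd_add (ν : Word n r) (x : Cn n) (m : ℕ) :
    (wCat ν x).2 (m + ν.2.length) = x m := by
  have h1 : ¬ (m + ν.2.length < ν.2.length) := by omega
  have h2 : m + ν.2.length - ν.2.length = m := by omega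
  simp [wCat, h1, h2]

lemma wCat_mem_cone (ν : Word n r) (x : Cn n) : wCat ν x ∈ cone ν :=
  ⟨rfl, fun i h => wCat_snd_lt ν x h⟩

/-- the tail of a point after `L` letters -/
def ctail (L : ℕ) (p : CNR n r) : Cn n := fun m => p.2 (m + L)

lemma eq_wCat {ν : Word n r} {p : CNR n r} (h : p ∈ cone ν) :
    p = wCat ν (ctail ν.2.length p) := by
  refine Prod.ext h.1 (funext fun j => ?_)
  by_cases hj : j < ν.2.length
  · rw [wCat_snd_lt ν _ hj]; exact h.2 j hj
  · have : j = (j - ν.2.length) + ν.2.length := by omega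
    rw [this, wCat_snd_add]
    simp [ctail]

lemma cone_nonempty (hn : 0 < n) (ν : Word n r) : (cone ν).Nonempty :=
  ⟨wCat ν (fun _ => ⟨0, hn⟩), wCat_mem_cone _ _⟩

lemma isOpen_cone (ν : Word n r) : IsOpen (cone ν) := by
  have : cone ν = (Prod.fst ⁻¹' {ν.1}) ∩
      ⋂ i : Fin ν.2.length, (fun p : CNR n r => p.2 i) ⁻¹' {ν.2.get i} := by
    ext p
    simp only [cone, Set.mem_setOf_eq, Set.mem_inter_iff, Set.mem_preimage,
      Set.mem_singleton_iff, Set.mem_iInter]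
    constructor
    · rintro ⟨h1, h2⟩; exact ⟨h1, fun i => h2 i i.2⟩
    · rintro ⟨h1, h2⟩; exact ⟨h1, fun i h => h2 ⟨i, h⟩⟩
  rw [this]
  refine IsOpen.inter (continuous_fst.isOpen_preimage _ (isOpen_discrete _)) ?_
  refine isOpen_iInter_of_finite fun i => ?_
  exact ((continuous_apply (i : ℕ)).comp continuous_snd).isOpen_preimage _ (isOpen_discrete _)

lemma wprefix_of_mem {ν₁ ν₂ : Word n r} {p : CNR n r} (h1 : p ∈ cone ν₁)
    (h2 : p ∈ cone ν₂) (hl : ν₁.2.length ≤ ν₂.2.length) : WPrefix ν₁ ν₂ := by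
  intro q hq
  refine ⟨hq.1.trans (h2.1.symm.trans h1.1), fun i h => ?_⟩
  have e1 : p.2 i = ν₁.2.get ⟨i, h⟩ := h1.2 i h
  have e2 : p.2 i = ν₂.2.get ⟨i, lt_of_lt_of_le h hl⟩ := h2.2 i (lt_of_lt_of_le h hl)
  rw [hq.2 i (lt_of_lt_of_le h hl), ← e2, e1]

lemma incomp_disjoint {ν₁ ν₂ : Word n r} (h : Incomp ν₁ ν₂) :
    Disjoint (cone ν₁) (cone ν₂) := by
  by_contra hd
  obtain ⟨p, h1, h2⟩ := Set.not_disjoint_iff.mp hd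
  rcases le_total ν₁.2.length ν₂.2.length with hl | hl
  · exact h.1 (wprefix_of_mem h1 h2 hl)
  · exact h.2 (wprefix_of_mem h2 h1 hl)


lemma exists_homeo_of_partitions {k : ℕ} (ν η : Fin k → Word n r)
    (hν : ∀ p : CNR n r, ∃! i, p ∈ cone (ν i))
    (hη : ∀ p : CNR n r, ∃! i, p ∈ cone (η i)) :
    ∃ g : Homeo n r, ∀ i x, g (wCat (ν i) x) = wCat (η i) x := by
  classical
  set I : CNR n r → Fin k := fun p => (hν p).choose with hIdef
  set J : CNR n r → Fin k := fun p => (hη p).choose with hJdef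
  have hI : ∀ p, p ∈ cone (ν (I p)) := fun p => (hν p).choose_spec.1
  have hIu : ∀ p i, p ∈ cone (ν i) → i = I p := fun p i h => (hν p).choose_spec.2 i h
  have hJ : ∀ p, p ∈ cone (η (J p)) := fun p => (hη p).choose_spec.1
  have hJu : ∀ p i, p ∈ cone (η i) → i = J p := fun p i h => (hη p).choose_spec.2 i h
  set F : CNR n r → CNR n r := fun p => wCat (η (I p)) (ctail (ν (I p)).2.length p) with hFdef
  set G : CNR n r → CNR n r := fun p => wCat (ν (J p)) (ctail (η (J p)).2.length p) with hGdef
  have hF : ∀ i x, F (wCat (ν i) x) = wCat (η i) x := by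
    intro i x
    have h1 : I (wCat (ν i) x) = i := (hIu _ i (wCat_mem_cone _ _)).symm
    simp only [hFdef, h1]
    congr 1
    funext m
    exact wCat_snd_add _ _ _
  have hG : ∀ i x, G (wCat (η i) x) = wCat (ν i) x := by
    intro i x
    have h1 : J (wCat (η i) x) = i := (hJu _ i (wCat_mem_cone _ _)).symm
    simp only [hGdef, h1]
    congr 1
    funext m
    exact wCat_snd_add _ _ _
  have hGF : ∀ p, G (F p) = p := by
    intro p
    have hp := eq_wCat (hI p)
    rw [hp, hF, hG]
  have hFG : ∀ p, F (G p) = p := by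
    intro p
    have hp := eq_wCat (hJ p)
    rw [hp, hG, hF]
  have hFc : Continuous F := by
    rw [continuous_iff_continuousAt]
    intro p
    set i := I p with hi
    have hmem : p ∈ cone (ν i) := hI p
    have hcont : Continuous (fun q : CNR n r => wCat (η i) (ctail (ν i).2.length q)) := by
      refine continuous_prodMk.mpr ⟨continuous_const, continuous_pi fun j => ?_⟩
      by_cases hj : j < (η i).2.length
      · simp only [wCat, hj, dif_pos]
        exact continuous_const
      · simp only [wCat, hj, dif_neg, not_false_iff]
        exact (continuous_apply _).comp continuous_snd
    refine ContinuousAt.congr hcont.continuousAt ?_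
    refine Filter.eventuallyEq_of_mem ((isOpen_cone (ν i)).mem_nhds hmem) fun q hq => ?_
    have : I q = i := (hIu q i hq).symm
    simp only [hFdef, this]
  let e : CNR n r ≃ CNR n r := ⟨F, G, hGF, hFG⟩
  have hec : Continuous e := hFc
  refine ⟨hec.homeoOfEquivCompactToT2, fun i x => ?_⟩
  show F (wCat (ν i) x) = wCat (η i) x
  exact hF i x


/-- `ω` (a level-`L` word) extends the word `ν`. -/
def Ext (L : ℕ) (ν : Word n r) (ω : Fin r × (Fin L → Fin n)) : Prop :=
  ω.1 = ν.1 ∧ ∀ (i : ℕ) (h : i < ν.2.length) (hL : i < L), ω.2 ⟨i, hL⟩ = ν.2.get ⟨i, h⟩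

/-- level-`L` word as a `Word`. -/
def toW {L : ℕ} (ω : Fin r × (Fin L → Fin n)) : Word n r := (ω.1, List.ofFn ω.2)

/-- truncation of a point to a level-`L` word. -/
def trunc (L : ℕ) (p : CNR n r) : Fin r × (Fin L → Fin n) := (p.1, fun i => p.2 i)

lemma toW_injective {L : ℕ} : Function.Injective (toW (n := n) (r := r) (L := L)) := by
  intro ω ω' h
  rw [Prod.ext_iff] at h
  obtain ⟨h1, h2⟩ := h
  exact Prod.ext h1 (List.ofFn_injective h2)

lemma mem_cone_toW {L : ℕ} {ω : Fin r × (Fin L → Fin n)} {p : CNR n r} :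
    p ∈ cone (toW ω) ↔ trunc L p = ω := by
  constructor
  · rintro ⟨h1, h2⟩
    refine Prod.ext h1 (funext fun i => ?_)
    have hi : (i : ℕ) < (toW ω).2.length := by simp [toW]
    have := h2 i hi
    simpa [trunc, toW] using this
  · rintro rfl
    refine ⟨rfl, fun i h => ?_⟩
    have hi : i < L := by simpa [toW] using h
    simp [toW, trunc, List.get_ofFn]

lemma ext_trunc_iff {L : ℕ} {ν : Word n r} (hL : ν.2.length ≤ L) (p : CNR n r) :
    Ext L ν (trunc L p) ↔ p ∈ cone ν := by
  constructor
  · rintro ⟨h1, h2⟩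
    exact ⟨h1, fun i h => h2 i h (lt_of_lt_of_le h hL)⟩
  · rintro ⟨h1, h2⟩
    exact ⟨h1, fun i h _ => h2 i h⟩

lemma cone_toW_subset {L : ℕ} {ν : Word n r} (hL : ν.2.length ≤ L)
    {ω : Fin r × (Fin L → Fin n)} (hE : Ext L ν ω) : cone (toW ω) ⊆ cone ν := by
  intro p hp
  rw [mem_cone_toW] at hp
  rw [← ext_trunc_iff hL, hp]
  exact hE

/-- The set of level-`L` extensions of `ν`. -/
noncomputable def extSet (L : ℕ) (ν : Word n r) : Finset (Fin r × (Fin L → Fin n)) :=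
  @Finset.filter _ (fun ω => Ext L ν ω) (Classical.decPred _) Finset.univ

lemma mem_extSet {L : ℕ} {ν : Word n r} {ω : Fin r × (Fin L → Fin n)} :
    ω ∈ extSet L ν ↔ Ext L ν ω := by
  simp [extSet, Finset.mem_filter]

lemma card_extSet {L : ℕ} (ν : Word n r) (hL : ν.2.length ≤ L) :
    (extSet (n := n) (r := r) L ν).card = n ^ (L - ν.2.length) := by
  classical
  set a := ν.2.length with ha
  have : (extSet (n := n) (r := r) L ν).card
      = (Finset.univ : Finset (Fin (L - a) → Fin n)).card := by
    refine Finset.card_bij' (fun ω _ => fun j => ω.2 ⟨a + (j : ℕ), by omega⟩)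
      (fun f _ => (ν.1, fun i => if h : (i : ℕ) < a then ν.2.get ⟨i, h⟩
        else f ⟨(i : ℕ) - a, by omega⟩)) ?_ ?_ ?_ ?_
    · intro ω hω
      exact Finset.mem_univ _
    · intro f _
      rw [mem_extSet]
      refine ⟨rfl, fun i h hiL => ?_⟩
      exact dif_pos (show i < a from h)
    · intro ω hω
      rw [mem_extSet] at hω
      refine Prod.ext hω.1.symm (funext fun i => ?_)
      by_cases h : (i : ℕ) < a
      · simp only [dif_pos h]
        exact (hω.2 i h i.2).symm
      · simp only [dif_neg h]
        have hii : (⟨a + ((i : ℕ) - a), by omega⟩ : Fin L) = i :=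
          Fin.ext (show a + ((i : ℕ) - a) = (i : ℕ) by omega)
        exact congrArg ω.2 hii
    · intro f _
      funext j
      have h : ¬ (a + (j : ℕ) < a) := by omega
      simp only [dif_neg h]
      have hjj : (⟨a + (j : ℕ) - a, by omega⟩ : Fin (L - a)) = j :=
        Fin.ext (show a + (j : ℕ) - a = (j : ℕ) by omega)
      exact congrArg f hjj
  rw [this]
  simp [ha]


/-- `S` is a cone partition of the set `A`. -/
def PartS (S : Finset (Word n r)) (A : Set (CNR n r)) : Prop :=
  (∀ w ∈ S, cone w ⊆ A) ∧ (∀ p ∈ A, ∃ w ∈ S, p ∈ cone w) ∧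
  (∀ w ∈ S, ∀ w' ∈ S, w ≠ w' → Disjoint (cone w) (cone w'))

lemma cone_wApp_subset (w : Word n r) (a : Fin n) : cone (wApp w [a]) ⊆ cone w := by
  rintro p ⟨h1, h2⟩
  refine ⟨h1, fun i h => ?_⟩
  have hi : i < (wApp w [a]).2.length := by simp [wApp]; omega
  rw [h2 i hi]
  simp only [wApp, List.get_eq_getElem]
  exact List.getElem_append_left h

lemma wApp_snd_len {w : Word n r} {a : Fin n} {p : CNR n r} (hp : p ∈ cone (wApp w [a])) :
    p.2 w.2.length = a := by
  have hi : w.2.length < (wApp w [a]).2.length := by simp [wApp]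
  rw [hp.2 w.2.length hi]
  simp only [wApp, List.get_eq_getElem]
  simp

lemma mem_cone_wApp {w : Word n r} {p : CNR n r} (hp : p ∈ cone w) :
    p ∈ cone (wApp w [p.2 w.2.length]) := by
  refine ⟨hp.1, fun i h => ?_⟩
  simp only [wApp, List.length_append, List.length_singleton] at h
  by_cases hi : i < w.2.length
  · rw [hp.2 i hi]
    simp only [wApp, List.get_eq_getElem]
    exact (List.getElem_append_left hi).symm
  · have : i = w.2.length := by omega
    subst this
    simp only [wApp, List.get_eq_getElem]
    simp

lemma part_split (hn : 2 ≤ n) {S : Finset (Word n r)} {A : Set (CNR n r)}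
    (hS : PartS S A) {w : Word n r} (hw : w ∈ S) :
    ∃ S' : Finset (Word n r), PartS S' A ∧ S'.card = S.card + (n - 1) := by
  classical
  obtain ⟨hsub, hcov, hdisj⟩ := hS
  set T : Finset (Word n r) := Finset.univ.image (fun a : Fin n => wApp w [a]) with hT
  have hmemT : ∀ v ∈ T, ∃ a : Fin n, v = wApp w [a] := by
    intro v hv
    simp only [hT, Finset.mem_image, Finset.mem_univ, true_and] at hv
    obtain ⟨a, ha⟩ := hv
    exact ⟨a, ha.symm⟩
  have hTsub : ∀ v ∈ T, cone v ⊆ cone w := by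
    intro v hv
    obtain ⟨a, rfl⟩ := hmemT v hv
    exact cone_wApp_subset w a
  have hdTe : Disjoint (S.erase w) T := by
    rw [Finset.disjoint_right]
    intro v hv hvS
    obtain ⟨a, rfl⟩ := hmemT v hv
    have hne : wApp w [a] ≠ w := by
      intro h
      have := congrArg (fun u : Word n r => u.2.length) h
      simp [wApp] at this
    have := hdisj _ (Finset.mem_of_mem_erase hvS) w hw hne
    obtain ⟨p, hp⟩ := cone_nonempty (by omega) (wApp w [a])
    exact (Set.disjoint_left.mp this hp) (cone_wApp_subset w a hp)
  refine ⟨S.erase w ∪ T, ⟨?_, ?_, ?_⟩, ?_⟩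
  · intro v hv
    rcases Finset.mem_union.mp hv with h | h
    · exact hsub v (Finset.mem_of_mem_erase h)
    · exact (hTsub v h).trans (hsub w hw)
  · intro p hp
    obtain ⟨v, hv, hpv⟩ := hcov p hp
    by_cases hvw : v = w
    · subst hvw
      refine ⟨wApp v [p.2 v.2.length], ?_, mem_cone_wApp hpv⟩
      refine Finset.mem_union_right _ ?_
      simp [hT]
    · exact ⟨v, Finset.mem_union_left _ (Finset.mem_erase.mpr ⟨hvw, hv⟩), hpv⟩
  · intro v hv v' hv' hne
    rcases Finset.mem_union.mp hv with h | h <;> rcases Finset.mem_union.mp hv' with h' | h'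
    · exact hdisj v (Finset.mem_of_mem_erase h) v' (Finset.mem_of_mem_erase h') hne
    · refine Set.disjoint_of_subset_right (hTsub v' h') ?_
      exact hdisj v (Finset.mem_of_mem_erase h) w hw (Finset.ne_of_mem_erase h)
    · refine Set.disjoint_of_subset_left (hTsub v h) ?_
      exact (hdisj v' (Finset.mem_of_mem_erase h') w hw (Finset.ne_of_mem_erase h')).symm
    · obtain ⟨a, rfl⟩ := hmemT v h
      obtain ⟨b, rfl⟩ := hmemT v' h'
      rw [Set.disjoint_left]
      intro p hp hp'
      have := (wApp_snd_len hp).symm.trans (wApp_snd_len hp')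
      exact hne (by rw [this])
  · rw [Finset.card_union_of_disjoint hdTe, Finset.card_erase_of_mem hw]
    have hTcard : T.card = n := by
      rw [hT, Finset.card_image_of_injective _ ?_, Finset.card_univ, Fintype.card_fin]
      intro a b hab
      have : w.2 ++ [a] = w.2 ++ [b] := congrArg Prod.snd hab
      have := List.append_cancel_left this
      simpa using this
    rw [hTcard]
    have : 1 ≤ S.card := Finset.card_pos.mpr ⟨w, hw⟩
    omega

lemma part_split_iter (hn : 2 ≤ n) {S : Finset (Word n r)} {A : Set (CNR n r)}
    (hS : PartS S A) (hne : S.Nonempty) (m : ℕ) :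
    ∃ S' : Finset (Word n r), PartS S' A ∧ S'.card = S.card + m * (n - 1) := by
  induction m with
  | zero => exact ⟨S, hS, by simp⟩
  | succ m ih =>
    obtain ⟨S', hS', hc⟩ := ih
    have hne' : S'.Nonempty := by
      rw [← Finset.card_pos, hc]
      have := Finset.card_pos.mpr hne
      omega
    obtain ⟨w, hw⟩ := hne'
    obtain ⟨S'', hS'', hc''⟩ := part_split hn hS' hw
    exact ⟨S'', hS'', by rw [hc'', hc]; ring⟩


lemma compl_part (hn : 2 ≤ n) {ν₁ ν₂ : Word n r} (hd : Disjoint (cone ν₁) (cone ν₂))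
    (hU : cone ν₁ ∪ cone ν₂ ≠ Set.univ) (L : ℕ) (h₁ : ν₁.2.length ≤ L)
    (h₂ : ν₂.2.length ≤ L) :
    ∃ S : Finset (Word n r), PartS S (cone ν₁ ∪ cone ν₂)ᶜ ∧ S.Nonempty ∧
      S.card + (n ^ (L - ν₁.2.length) + n ^ (L - ν₂.2.length)) = r * n ^ L := by
  classical
  set C : Finset (Fin r × (Fin L → Fin n)) := (extSet L ν₁ ∪ extSet L ν₂)ᶜ with hC
  have hmemC : ∀ ω, ω ∈ C ↔ (¬ Ext L ν₁ ω ∧ ¬ Ext L ν₂ ω) := by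
    intro ω
    simp [hC, Finset.mem_compl, Finset.mem_union, mem_extSet, not_or]
  set S : Finset (Word n r) := C.image toW with hS
  have hmemS : ∀ w ∈ S, ∃ ω ∈ C, w = toW ω := by
    intro w hw
    simp only [hS, Finset.mem_image] at hw
    obtain ⟨ω, hω, rfl⟩ := hw
    exact ⟨ω, hω, rfl⟩
  have hEdisj : Disjoint (extSet L ν₁) (extSet L ν₂) := by
    rw [Finset.disjoint_left]
    intro ω hω1 hω2
    rw [mem_extSet] at hω1 hω2
    obtain ⟨p, hp⟩ := cone_nonempty (show 0 < n by omega) (toW ω)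
    exact Set.disjoint_left.mp hd (cone_toW_subset h₁ hω1 hp) (cone_toW_subset h₂ hω2 hp)
  refine ⟨S, ⟨?_, ?_, ?_⟩, ?_, ?_⟩
  · intro w hw
    obtain ⟨ω, hωC, rfl⟩ := hmemS w hw
    rw [hmemC] at hωC
    intro p hp
    rw [mem_cone_toW] at hp
    simp only [Set.mem_compl_iff, Set.mem_union, not_or]
    constructor
    · intro hp1
      exact hωC.1 (hp ▸ (ext_trunc_iff h₁ p).mpr hp1)
    · intro hp2
      exact hωC.2 (hp ▸ (ext_trunc_iff h₂ p).mpr hp2)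
  · intro p hp
    simp only [Set.mem_compl_iff, Set.mem_union, not_or] at hp
    refine ⟨toW (trunc L p), ?_, mem_cone_toW.mpr rfl⟩
    refine Finset.mem_image_of_mem _ ?_
    rw [hmemC]
    exact ⟨fun h => hp.1 ((ext_trunc_iff h₁ p).mp h), fun h => hp.2 ((ext_trunc_iff h₂ p).mp h)⟩
  · intro w hw w' hw' hne
    obtain ⟨ω, hωC, rfl⟩ := hmemS w hw
    obtain ⟨ω', hωC', rfl⟩ := hmemS w' hw'
    rw [Set.disjoint_left]
    intro p hp hp'
    rw [mem_cone_toW] at hp hp'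
    exact hne (by rw [← hp, ← hp'])
  · obtain ⟨p, hp⟩ := Set.ne_univ_iff_exists_notMem _ |>.mp hU
    simp only [Set.mem_union, not_or] at hp
    refine ⟨toW (trunc L p), Finset.mem_image_of_mem _ ?_⟩
    rw [hmemC]
    exact ⟨fun h => hp.1 ((ext_trunc_iff h₁ p).mp h), fun h => hp.2 ((ext_trunc_iff h₂ p).mp h)⟩
  · have hcard : S.card = C.card := Finset.card_image_of_injective _ toW_injective
    have hcC : C.card = r * n ^ L - ((extSet L ν₁).card + (extSet L ν₂).card) := by
      rw [hC, Finset.card_compl, Finset.card_union_of_disjoint hEdisj]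
      congr 1
      simp [Fintype.card_prod, Fintype.card_fun]
    have hle : (extSet L ν₁ ∪ extSet L ν₂).card ≤ r * n ^ L := by
      have := Finset.card_le_univ (extSet L ν₁ ∪ extSet L ν₂)
      simpa [Fintype.card_prod, Fintype.card_fun] using this
    rw [Finset.card_union_of_disjoint hEdisj] at hle
    rw [hcard, hcC, card_extSet ν₁ h₁, card_extSet ν₂ h₂]
    rw [card_extSet ν₁ h₁, card_extSet ν₂ h₂] at hle
    omega

lemma family_part {M : ℕ} (ν₁ ν₂ : Word n r) (hd : Disjoint (cone ν₁) (cone ν₂))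
    (f : Fin M → Word n r)
    (hfA : ∀ i, cone (f i) ⊆ (cone ν₁ ∪ cone ν₂)ᶜ)
    (hfc : ∀ p ∈ (cone ν₁ ∪ cone ν₂)ᶜ, ∃ i, p ∈ cone (f i))
    (hfd : ∀ i j, i ≠ j → Disjoint (cone (f i)) (cone (f j))) :
    ∃ F : Fin (M + 2) → Word n r, (∀ p : CNR n r, ∃! i, p ∈ cone (F i)) ∧
      F ⟨M, by omega⟩ = ν₁ ∧ F ⟨M + 1, by omega⟩ = ν₂ := by
  classical
  set F : Fin (M + 2) → Word n r := fun i =>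
    if h : (i : ℕ) < M then f ⟨i, h⟩ else if (i : ℕ) = M then ν₁ else ν₂ with hF
  have hFM : F ⟨M, by omega⟩ = ν₁ := by simp [hF]
  have hFM1 : F ⟨M + 1, by omega⟩ = ν₂ := by
    simp only [hF]
    rw [dif_neg (by omega), if_neg (by omega)]
  have hsub : ∀ i : Fin (M + 2), ¬ ((i : ℕ) < M) → cone (F i) ⊆ cone ν₁ ∪ cone ν₂ := by
    intro i hi
    simp only [hF, dif_neg hi]
    by_cases h : (i : ℕ) = M
    · rw [if_pos h]; exact Set.subset_union_left
    · rw [if_neg h]; exact Set.subset_union_right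
  have hFd : ∀ i j : Fin (M + 2), i ≠ j → Disjoint (cone (F i)) (cone (F j)) := by
    have key : ∀ i j : Fin (M + 2), i ≠ j → (i : ℕ) < M →
        Disjoint (cone (F i)) (cone (F j)) := by
      intro i j hne hi
      by_cases hj : (j : ℕ) < M
      · have : F i = f ⟨i, hi⟩ := by simp [hF, hi]
        have h2 : F j = f ⟨j, hj⟩ := by simp [hF, hj]
        rw [this, h2]
        refine hfd _ _ ?_
        intro h
        exact hne (Fin.ext (show (i : ℕ) = (j : ℕ) from congrArg (Fin.val (n := M)) h))
      · have h1 : F i = f ⟨i, hi⟩ := by simp [hF, hi]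
        rw [Set.disjoint_left]
        intro p hp hp'
        have := hfA ⟨i, hi⟩ (h1 ▸ hp)
        exact this (hsub j hj hp')
    intro i j hne
    by_cases hi : (i : ℕ) < M
    · exact key i j hne hi
    · by_cases hj : (j : ℕ) < M
      · exact (key j i hne.symm hj).symm
      · -- both ≥ M
        have hij : ((i : ℕ) = M ∧ (j : ℕ) = M + 1) ∨ ((i : ℕ) = M + 1 ∧ (j : ℕ) = M) := by
          have hi2 := i.2
          have hj2 := j.2
          have : (i : ℕ) ≠ (j : ℕ) := fun h => hne (Fin.ext h)
          omega
        rcases hij with ⟨hi1, hj1⟩ | ⟨hi1, hj1⟩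
        · have e1 : F i = ν₁ := by simp [hF, hi1]
          have e2 : F j = ν₂ := by
            simp only [hF]
            rw [dif_neg (by omega), if_neg (by omega)]
          rw [e1, e2]; exact hd
        · have e1 : F i = ν₂ := by
            simp only [hF]
            rw [dif_neg (by omega), if_neg (by omega)]
          have e2 : F j = ν₁ := by simp [hF, hj1]
          rw [e1, e2]; exact hd.symm
  refine ⟨F, fun p => ?_, hFM, hFM1⟩
  have hex : ∃ i, p ∈ cone (F i) := by
    by_cases h1 : p ∈ cone ν₁
    · exact ⟨⟨M, by omega⟩, hFM ▸ h1⟩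
    · by_cases h2 : p ∈ cone ν₂
      · exact ⟨⟨M + 1, by omega⟩, hFM1 ▸ h2⟩
      · obtain ⟨i, hi⟩ := hfc p (by simp [h1, h2])
        refine ⟨⟨(i : ℕ), by omega⟩, ?_⟩
        have : F ⟨(i : ℕ), by omega⟩ = f i := by simp [hF, i.2]
        rw [this]
        exact hi
  obtain ⟨i, hi⟩ := hex
  refine ⟨i, hi, fun j hj => ?_⟩
  by_contra hne
  exact Set.disjoint_left.mp (hFd j i hne) hj hi


lemma part_index {S : Finset (Word n r)} {A : Set (CNR n r)} (hS : PartS S A)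
    {M : ℕ} (hc : S.card = M) :
    ∃ f : Fin M → Word n r, (∀ i, cone (f i) ⊆ A) ∧ (∀ p ∈ A, ∃ i, p ∈ cone (f i)) ∧
      (∀ i j, i ≠ j → Disjoint (cone (f i)) (cone (f j))) := by
  subst hc
  set e := S.equivFin with he
  refine ⟨fun i => (e.symm i : Word n r), ?_, ?_, ?_⟩
  · intro i
    exact hS.1 _ (e.symm i).2
  · intro p hp
    obtain ⟨w, hw, hpw⟩ := hS.2.1 p hp
    refine ⟨e ⟨w, hw⟩, ?_⟩
    show p ∈ cone ((e.symm (e ⟨w, hw⟩)) : Word n r)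
    rw [Equiv.symm_apply_apply]
    exact hpw
  · intro i j hne
    refine hS.2.2 _ (e.symm i).2 _ (e.symm j).2 ?_
    intro h
    exact hne (e.symm.injective (Subtype.ext h))

lemma pow_modEq_one (hn : 2 ≤ n) (t : ℕ) : n ^ t ≡ 1 [MOD n - 1] := by
  have h1 : (1 : ℕ) ≡ n [MOD n - 1] := (Nat.modEq_iff_dvd' (by omega)).mpr dvd_rfl
  have := (h1.symm).pow t
  simpa using this

theorem exists_higman_on_two_cones' (n r : ℕ) (hn : 2 ≤ n) (hr1 : 1 ≤ r)
    (hrn : r < n) (ν₁ ν₂ η₁ η₂ : Word n r)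
    (hν : Incomp ν₁ ν₂) (hη : Incomp η₁ η₂)
    (hνU : cone ν₁ ∪ cone ν₂ ≠ Set.univ) (hηU : cone η₁ ∪ cone η₂ ≠ Set.univ) :
    ∃ g : Homeo n r, IsHigman g ∧
      ∀ x : Cn n, g (wCat ν₁ x) = wCat η₁ x ∧ g (wCat ν₂ x) = wCat η₂ x := by
  classical
  have hdν := incomp_disjoint hν
  have hdη := incomp_disjoint hη
  set L : ℕ := (ν₁.2.length ⊔ ν₂.2.length) ⊔ (η₁.2.length ⊔ η₂.2.length) with hL
  have hL1 : ν₁.2.length ≤ L := le_sup_of_le_left le_sup_left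
  have hL2 : ν₂.2.length ≤ L := le_sup_of_le_left le_sup_right
  have hL3 : η₁.2.length ≤ L := le_sup_of_le_right le_sup_left
  have hL4 : η₂.2.length ≤ L := le_sup_of_le_right le_sup_right
  obtain ⟨Sν, hSν, hSνne, hcν⟩ := compl_part hn hdν hνU L hL1 hL2
  obtain ⟨Sη, hSη, hSηne, hcη⟩ := compl_part hn hdη hηU L hL3 hL4
  set Nν := Sν.card with hNν
  set Nη := Sη.card with hNη
  have hmod : Nν ≡ Nη [MOD n - 1] := by
    have h2 : Nν + 2 ≡ Nη + 2 [MOD n - 1] := by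
      calc Nν + 2 ≡ Nν + (n ^ (L - ν₁.2.length) + n ^ (L - ν₂.2.length)) [MOD n - 1] :=
            (Nat.ModEq.refl Nν).add
              (((pow_modEq_one hn _).add (pow_modEq_one hn _)).symm)
        _ = Nη + (n ^ (L - η₁.2.length) + n ^ (L - η₂.2.length)) := by omega
        _ ≡ Nη + 2 [MOD n - 1] :=
            (Nat.ModEq.refl Nη).add ((pow_modEq_one hn _).add (pow_modEq_one hn _))
    exact Nat.ModEq.add_right_cancel' 2 h2
  set mν := (Nη - Nν) / (n - 1) with hmν
  set mη := (Nν - Nη) / (n - 1) with hmη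
  have key : Nν + mν * (n - 1) = Nη + mη * (n - 1) := by
    rcases le_total Nν Nη with hle | hle
    · have hdvd : (n - 1) ∣ (Nη - Nν) := (Nat.modEq_iff_dvd' hle).mp hmod
      have h3 : mν * (n - 1) = Nη - Nν := Nat.div_mul_cancel hdvd
      have h4 : Nν - Nη = 0 := by omega
      have h5 : mη = 0 := by rw [hmη, h4]; simp
      have h6 : mη * (n - 1) = 0 := by rw [h5, Nat.zero_mul]
      omega
    · have hdvd : (n - 1) ∣ (Nν - Nη) := (Nat.modEq_iff_dvd' hle).mp hmod.symm
      have h3 : mη * (n - 1) = Nν - Nη := Nat.div_mul_cancel hdvd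
      have h4 : Nη - Nν = 0 := by omega
      have h5 : mν = 0 := by rw [hmν, h4]; simp
      have h6 : mν * (n - 1) = 0 := by rw [h5, Nat.zero_mul]
      omega
  set M := Nν + mν * (n - 1) with hM
  obtain ⟨Sν', hSν', hcν'⟩ := part_split_iter hn hSν hSνne mν
  obtain ⟨Sη', hSη', hcη'⟩ := part_split_iter hn hSη hSηne mη
  have hcν'' : Sν'.card = M := by rw [hcν', hM, hNν]
  have hcη'' : Sη'.card = M := by rw [hcη', key, hNη]
  obtain ⟨fν, hfν1, hfν2, hfν3⟩ := part_index hSν' hcν''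
  obtain ⟨fη, hfη1, hfη2, hfη3⟩ := part_index hSη' hcη''
  obtain ⟨Fν, hFνpart, hFνM, hFνM1⟩ := family_part ν₁ ν₂ hdν fν hfν1 hfν2 hfν3
  obtain ⟨Fη, hFηpart, hFηM, hFηM1⟩ := family_part η₁ η₂ hdη fη hfη1 hfη2 hfη3
  obtain ⟨g, hg⟩ := exists_homeo_of_partitions Fν Fη hFνpart hFηpart
  refine ⟨g, ⟨M + 2, by omega, Fν, Fη, hFνpart, hFηpart, hg⟩, fun x => ⟨?_, ?_⟩⟩
  · have := hg ⟨M, by omega⟩ x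
    rw [hFνM, hFηM] at this
    exact this
  · have := hg ⟨M + 1, by omega⟩ x
    rw [hFνM1, hFηM1] at this
    exact this

end Aux

/-- Given incomparable pairs `ν₁ ⊥ ν₂` and `η₁ ⊥ η₂` whose cone
unions are proper, there is `g ∈ G_{n,r}` acting as the basic cone maps
`g_{ν₁,η₁}` and `g_{ν₂,η₂}`. -/
theorem exists_higman_on_two_cones (n r : ℕ) (hn : 2 ≤ n) (hr1 : 1 ≤ r)
    (hrn : r < n) (ν₁ ν₂ η₁ η₂ : Word n r)
    (hν : Incomp ν₁ ν₂) (hη : Incomp η₁ η₂)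
    (hνU : cone ν₁ ∪ cone ν₂ ≠ Set.univ) (hηU : cone η₁ ∪ cone η₂ ≠ Set.univ) :
    ∃ g : Homeo n r, IsHigman g ∧
      ∀ x : Cn n, g (wCat ν₁ x) = wCat η₁ x ∧ g (wCat ν₂ x) = wCat η₂ x :=
  exists_higman_on_two_cones' n r hn hr1 hrn ν₁ ν₂ η₁ η₂ hν hη hνU hηU

end HigmanAut
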